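/- Let I be an abelian ideal of Φ⁺ and β₁, β₂ ∈ I with β₂ long. Suppose there exist γ₁, γ₂ ∈ Φ⁺ with β₁ + β₂ = γ₁ + γ₂ and β₁ < γᵢ < β₂ for i = 1, 2. Then β₂ - β₁ ∉ Φ; in fact (β₁, β₂) = 0. -/

import Mathlib

local notation "⟪" x ", " y "⟫" => @inner ℝ _ _ x y

/-- A finite (crystallographic) root system in a real inner product space. -/
structure CrystRS (E : Type) [NormedAddCommGroup E] [InnerProductSpace ℝ E] where
  roots : Set E
  finite : roots.Finite
  nonzero : ∀ β ∈ roots, β ≠ (0 : E)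
  neg_mem : ∀ β ∈ roots, -β ∈ roots
  cartan : ∀ β ∈ roots, ∀ γ ∈ roots, ∃ n : ℤ, 2 * ⟪β, γ⟫ = (n : ℝ) * ⟪γ, γ⟫
  reflect : ∀ β ∈ roots, ∀ γ ∈ roots, β - (2 * ⟪β, γ⟫ / ⟪γ, γ⟫) • γ ∈ roots

namespace CrystRS

variable {E : Type} [NormedAddCommGroup E] [InnerProductSpace ℝ E]

/-- Irreducibility: the set of roots admits no nontrivial orthogonal decomposition. -/
def Irred (R : CrystRS E) : Prop :=
  ∀ A B : Set E, R.roots = A ∪ B → (∀ a ∈ A, ∀ b ∈ B, ⟪a, b⟫ = 0) → A = ∅ ∨ B = ∅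

end CrystRS

/-- A root system equipped with a system of simple roots (hence a positive system). -/
structure BasedRS (E : Type) [NormedAddCommGroup E] [InnerProductSpace ℝ E]
    extends CrystRS E where
  simple : Finset E
  simple_sub : (simple : Set E) ⊆ roots
  simple_indep : LinearIndependent ℝ (fun α : {x // x ∈ simple} => (α : E))
  decomp : ∀ β ∈ roots,
    β ∈ AddSubmonoid.closure (simple : Set E) ∨ -β ∈ AddSubmonoid.closure (simple : Set E)

/-- `γ - β` is a nonnegative integer combination of elements of `P`. -/
def leRel {E : Type} [NormedAddCommGroup E] [InnerProductSpace ℝ E]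
    (P : Set E) (β γ : E) : Prop := γ - β ∈ AddSubmonoid.closure P

/-- The indecomposable elements of `P` (the simple roots of a positive system `P`). -/
def SimpleOf {E : Type} [NormedAddCommGroup E] [InnerProductSpace ℝ E]
    (P : Set E) : Set E := {β ∈ P | ∀ γ ∈ P, ∀ δ ∈ P, β ≠ γ + δ}

/-- `C` is an irreducible component of `Ψ`: nonempty, orthogonal to the rest of `Ψ`,
and admitting no further nontrivial orthogonal decomposition. -/
def IsComponent {E : Type} [NormedAddCommGroup E] [InnerProductSpace ℝ E]
    (Ψ C : Set E) : Prop :=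
  C ⊆ Ψ ∧ C.Nonempty ∧ (∀ a ∈ C, ∀ b ∈ Ψ \ C, ⟪a, b⟫ = 0) ∧
    ∀ A B : Set E, C = A ∪ B → (∀ a ∈ A, ∀ b ∈ B, ⟪a, b⟫ = 0) → A = ∅ ∨ B = ∅

namespace BasedRS

variable {E : Type} [NormedAddCommGroup E] [InnerProductSpace ℝ E] (R : BasedRS E)

/-- The positive roots: roots that are nonnegative integer combinations of simple roots. -/
def pos : Set E := {β ∈ R.roots | β ∈ AddSubmonoid.closure (R.simple : Set E)}

/-- The standard partial order: `γ - β` is a nonnegative integer combination of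
simple roots. -/
def le (β γ : E) : Prop := γ - β ∈ AddSubmonoid.closure (R.simple : Set E)

def lt (β γ : E) : Prop := R.le β γ ∧ β ≠ γ

/-- An abelian ideal of the positive system: upward closed, and no two of its
elements sum to a root. -/
def IsAbelianIdeal (I : Set E) : Prop :=
  I ⊆ R.pos ∧ (∀ β ∈ I, ∀ γ ∈ R.pos, R.le β γ → γ ∈ I) ∧
    ∀ β ∈ I, ∀ γ ∈ I, β + γ ∉ R.roots

/-- A short root: of minimal length among the roots. -/
def IsShort (β : E) : Prop := β ∈ R.roots ∧ ∀ γ ∈ R.roots, ‖β‖ ≤ ‖γ‖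

/-- A long root: of maximal length among the roots. -/
def IsLong (β : E) : Prop := β ∈ R.roots ∧ ∀ γ ∈ R.roots, ‖γ‖ ≤ ‖β‖

/-- `θ` is the highest root. -/
def IsHighest (θ : E) : Prop := θ ∈ R.pos ∧ ∀ β ∈ R.roots, R.le β θ

/-- The coefficient of the simple root `α` in `β` equals `1`. -/
def coeffOne (α β : E) : Prop :=
  β - α ∈ Submodule.span ℤ ((R.simple : Set E) \ {α})

end BasedRS


section AuxLemmas

variable {E : Type} [NormedAddCommGroup E] [InnerProductSpace ℝ E]

lemma aux_exists_functional (s : Finset E)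
    (hli : LinearIndependent ℝ (fun α : {x // x ∈ s} => (α : E))) :
    ∃ f : E →ₗ[ℝ] ℝ, ∀ α ∈ s, f α = 1 := by
  set p : Submodule ℝ E :=
    Submodule.span ℝ (Set.range (fun α : {x // x ∈ s} => (α : E))) with hp
  let b : Module.Basis {x // x ∈ s} ℝ p := Module.Basis.span hli
  let f0 : p →ₗ[ℝ] ℝ := b.constr ℝ (fun _ => (1:ℝ))
  obtain ⟨g, hg⟩ := f0.exists_extend
  refine ⟨g, ?_⟩
  intro α hα
  have hmem : (α : E) ∈ p := Submodule.subset_span ⟨⟨α, hα⟩, rfl⟩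
  have h1 : g α = f0 ⟨α, hmem⟩ := by
    have := LinearMap.congr_fun hg ⟨α, hmem⟩
    simpa using this
  rw [h1]
  have h2 : (⟨α, hmem⟩ : p) = b ⟨α, hα⟩ :=
    Subtype.ext (by simp only [b]; exact congrArg Subtype.val (Module.Basis.span_apply hli ⟨α, hα⟩).symm)
  rw [h2]
  exact Module.Basis.constr_basis b ℝ (fun _ => (1:ℝ)) ⟨α, hα⟩

lemma aux_eq_zero_of_mem_closure (s : Finset E)
    (hli : LinearIndependent ℝ (fun α : {x // x ∈ s} => (α : E))) {x : E}
    (h1 : x ∈ AddSubmonoid.closure (s : Set E))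
    (h2 : -x ∈ AddSubmonoid.closure (s : Set E)) : x = 0 := by
  obtain ⟨f, hf⟩ := aux_exists_functional s hli
  let S : AddSubmonoid E :=
    { carrier := {y | 0 ≤ f y ∧ (f y = 0 → y = 0)}
      zero_mem' := ⟨by simp, fun _ => rfl⟩
      add_mem' := by
        rintro a b ⟨ha1, ha2⟩ ⟨hb1, hb2⟩
        refine ⟨by rw [map_add]; linarith, fun h => ?_⟩
        rw [map_add] at h
        have ha0 : f a = 0 := le_antisymm (by linarith) ha1
        have hb0 : f b = 0 := le_antisymm (by linarith) hb1
        rw [ha2 ha0, hb2 hb0, add_zero] }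
  have hsub : AddSubmonoid.closure (s : Set E) ≤ S := by
    rw [AddSubmonoid.closure_le]
    intro z hz
    refine ⟨by rw [hf z hz]; norm_num, fun h => ?_⟩
    rw [hf z hz] at h; norm_num at h
  have hx := hsub h1
  have hnx := hsub h2
  have hfx : f x = 0 := by
    have h3 : 0 ≤ f (-x) := hnx.1
    rw [map_neg] at h3
    exact le_antisymm (by linarith) hx.1
  exact hx.2 hfx

lemma aux_inner_self_pos {x : E} (hx : x ≠ 0) : (0:ℝ) < ⟪x, x⟫ := by
  rw [real_inner_self_eq_norm_mul_norm]
  have : 0 < ‖x‖ := norm_pos_iff.mpr hx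
  positivity

lemma aux_add_mem_of_inner_neg (R : CrystRS E) {α β : E}
    (hα : α ∈ R.roots) (hβ : β ∈ R.roots) (hne : α ≠ -β) (hneg : ⟪α, β⟫ < 0) :
    α + β ∈ R.roots := by
  have hα0 : α ≠ 0 := R.nonzero α hα
  have hβ0 : β ≠ 0 := R.nonzero β hβ
  have hαα : (0:ℝ) < ⟪α, α⟫ := aux_inner_self_pos hα0
  have hββ : (0:ℝ) < ⟪β, β⟫ := aux_inner_self_pos hβ0
  obtain ⟨n, hn⟩ := R.cartan α hα β hβ
  obtain ⟨m, hm⟩ := R.cartan β hβ α hα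
  have hsym : ⟪β, α⟫ = ⟪α, β⟫ := real_inner_comm α β
  have hnR : (n:ℝ) < 0 := by nlinarith
  have hmR : (m:ℝ) < 0 := by nlinarith
  have hn1 : n ≤ -1 := by
    have : n < 0 := by exact_mod_cast hnR
    omega
  have hm1 : m ≤ -1 := by
    have : m < 0 := by exact_mod_cast hmR
    omega
  by_cases hcn : n = -1
  · have hr := R.reflect α hα β hβ
    have hq : 2 * ⟪α, β⟫ / ⟪β, β⟫ = (-1:ℝ) := by
      rw [hn, hcn]; push_cast; field_simp
    rw [hq] at hr
    have he : α - (-1:ℝ) • β = α + β := by simp [sub_eq_add_neg]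
    rwa [he] at hr
  · by_cases hcm : m = -1
    · have hr := R.reflect β hβ α hα
      have hq : 2 * ⟪β, α⟫ / ⟪α, α⟫ = (-1:ℝ) := by
        rw [hm, hcm]; push_cast; field_simp
      rw [hq] at hr
      have he : β - (-1:ℝ) • α = α + β := by
        simp [sub_eq_add_neg]; abel
      rwa [he] at hr
    · exfalso
      have hn2R : (n:ℝ) ≤ -2 := by exact_mod_cast (by omega : n ≤ -2)
      have hm2R : (m:ℝ) ≤ -2 := by exact_mod_cast (by omega : m ≤ -2)
      have hprod : 4 * (⟪α, β⟫ * ⟪α, β⟫) = (n:ℝ) * (m:ℝ) * (⟪α, α⟫ * ⟪β, β⟫) := by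
        have hm' := hm; rw [hsym] at hm'
        nlinarith [hn, hm']
      have hcs : ⟪α, β⟫ * ⟪α, β⟫ ≤ ⟪α, α⟫ * ⟪β, β⟫ := real_inner_mul_inner_self_le α β
      have h4 : 4 * (⟪α, α⟫ * ⟪β, β⟫) ≤ (n:ℝ) * (m:ℝ) * (⟪α, α⟫ * ⟪β, β⟫) := by
        have hAB : (0:ℝ) < ⟪α, α⟫ * ⟪β, β⟫ := mul_pos hαα hββ
        have hnm : (4:ℝ) ≤ (n:ℝ) * (m:ℝ) := by nlinarith
        nlinarith [mul_le_mul_of_nonneg_right hnm hAB.le]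
      have heq : ⟪α, β⟫ * ⟪α, β⟫ = ⟪α, α⟫ * ⟪β, β⟫ := le_antisymm hcs (by linarith)
      have hnorm : ‖⟪α, β⟫‖ = ‖α‖ * ‖β‖ := by
        have h2 : (⟪α, β⟫)^2 = (‖α‖ * ‖β‖)^2 := by
          rw [sq, sq, heq, real_inner_self_eq_norm_mul_norm,
            real_inner_self_eq_norm_mul_norm]
          ring
        rw [Real.norm_eq_abs, ← Real.sqrt_sq_eq_abs, h2,
          Real.sqrt_sq (by positivity)]
      obtain ⟨r, hr0, hrβ⟩ := (norm_inner_eq_norm_iff hα0 hβ0).mp hnorm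
      subst hrβ
      rw [real_inner_smul_right] at hneg
      rw [real_inner_smul_left] at hm
      rw [real_inner_smul_right, real_inner_smul_left, real_inner_smul_right] at hn
      have hrneg : r < 0 := by nlinarith
      have hmr : (m:ℝ) = 2 * r := by
        have h3 : (2 * r) * ⟪α, α⟫ = (m:ℝ) * ⟪α, α⟫ := by linarith [hm]
        have := mul_right_cancel₀ (ne_of_gt hαα) h3
        linarith
      have hnr : (n:ℝ) * r = 2 := by
        have h3 : (2 * r) * ⟪α, α⟫ = ((n:ℝ) * r * r) * ⟪α, α⟫ := by
          nlinarith [hn]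
        have h4 := mul_right_cancel₀ (ne_of_gt hαα) h3
        have h5 : ((n:ℝ) * r - 2) * r = 0 := by nlinarith
        rcases mul_eq_zero.mp h5 with h6 | h6
        · linarith
        · exact absurd h6 (ne_of_lt hrneg)
      have hr1 : r ≤ -1 := by linarith [hmr ▸ hm2R]
      have hr2 : -1 ≤ r := by nlinarith
      have hre : r = -1 := le_antisymm hr1 hr2
      subst hre
      exact hne (by simp)

lemma aux_long_bound (R : BasedRS E) {β γ : E} (hlong : R.IsLong β)
    (hγ : γ ∈ R.roots) (hne : γ ≠ β) : ⟪γ, β⟫ ≤ ⟪β, β⟫ / 2 := by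
  obtain ⟨hβ, hmax⟩ := hlong
  have hβ0 : β ≠ 0 := R.nonzero β hβ
  have hββ : (0:ℝ) < ⟪β, β⟫ := aux_inner_self_pos hβ0
  obtain ⟨n, hn⟩ := R.cartan γ hγ β hβ
  by_cases h : n ≤ 1
  · have : (n:ℝ) ≤ 1 := by exact_mod_cast h
    nlinarith [hn]
  · exfalso
    have h2 : (2:ℝ) ≤ (n:ℝ) := by exact_mod_cast (by omega : (2:ℤ) ≤ n)
    have hge : ⟪β, β⟫ ≤ ⟪γ, β⟫ := by nlinarith [hn]
    have hcs : ⟪γ, β⟫ ≤ ‖γ‖ * ‖β‖ := real_inner_le_norm γ β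
    have hlen : ‖γ‖ ≤ ‖β‖ := hmax γ hγ
    have hb : ⟪β, β⟫ = ‖β‖ * ‖β‖ := real_inner_self_eq_norm_mul_norm β
    have hβpos : 0 < ‖β‖ := norm_pos_iff.mpr hβ0
    have hnormeq : ‖γ‖ = ‖β‖ := by nlinarith
    have hinner : ⟪γ, β⟫ = ‖γ‖ * ‖β‖ := by nlinarith
    have := (inner_eq_norm_mul_iff_real).mp hinner
    rw [hnormeq] at this
    have : γ = β := smul_right_injective E (ne_of_gt hβpos) this
    exact hne this

end AuxLemmas

theorem statement11 {E : Type} [NormedAddCommGroup E] [InnerProductSpace ℝ E] (R : BasedRS E) (hirr : R.toCrystRS.Irred)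
    (I : Set E) (hI : R.IsAbelianIdeal I)
    (β₁ β₂ : E) (hb1 : β₁ ∈ I) (hb2 : β₂ ∈ I) (hlong : R.IsLong β₂)
    (γ₁ γ₂ : E) (hg1 : γ₁ ∈ R.pos) (hg2 : γ₂ ∈ R.pos)
    (hsum : β₁ + β₂ = γ₁ + γ₂)
    (hlt1 : R.lt β₁ γ₁) (hlt2 : R.lt β₁ γ₂) (hlt3 : R.lt γ₁ β₂) (hlt4 : R.lt γ₂ β₂) :
    β₂ - β₁ ∉ R.roots ∧ ⟪β₁, β₂⟫ = 0 := by
  obtain ⟨hIpos, hIup, hIab⟩ := hI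
  have hcl := R.simple_indep
  have hg1I : γ₁ ∈ I := hIup β₁ hb1 γ₁ hg1 hlt1.1
  have hg2I : γ₂ ∈ I := hIup β₁ hb1 γ₂ hg2 hlt2.1
  have hb1r : β₁ ∈ R.roots := (hIpos hb1).1
  have hb2r : β₂ ∈ R.roots := (hIpos hb2).1
  have hg1r : γ₁ ∈ R.roots := hg1.1
  have hg2r : γ₂ ∈ R.roots := hg2.1
  have hb2_0 : β₂ ≠ 0 := R.nonzero β₂ hb2r
  have hββ : (0:ℝ) < ⟪β₂, β₂⟫ := aux_inner_self_pos hb2_0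
  have hne12 : β₁ ≠ -β₂ := by
    intro h
    apply hb2_0
    apply aux_eq_zero_of_mem_closure R.simple hcl (hIpos hb2).2
    rw [← h]
    exact (hIpos hb1).2
  have hge : (0:ℝ) ≤ ⟪β₁, β₂⟫ := by
    by_contra h
    push_neg at h
    exact hIab β₁ hb1 β₂ hb2 (aux_add_mem_of_inner_neg R.toCrystRS hb1r hb2r hne12 h)
  have hbd1 : ⟪γ₁, β₂⟫ ≤ ⟪β₂, β₂⟫ / 2 := aux_long_bound R hlong hg1r hlt3.2
  have hbd2 : ⟪γ₂, β₂⟫ ≤ ⟪β₂, β₂⟫ / 2 := aux_long_bound R hlong hg2r hlt4.2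
  have hkey : ⟪β₁, β₂⟫ + ⟪β₂, β₂⟫ = ⟪γ₁, β₂⟫ + ⟪γ₂, β₂⟫ := by
    have h := congrArg (fun x => ⟪x, β₂⟫) hsum
    simpa [inner_add_left] using h
  have hzero : ⟪β₁, β₂⟫ = 0 := le_antisymm (by linarith) hge
  refine ⟨?_, hzero⟩
  intro hδ
  have hδne : β₂ - β₁ ≠ β₂ := by
    intro h
    apply R.nonzero β₁ hb1r
    have : β₂ - β₁ - β₂ = 0 := by rw [h]; abel
    simpa using this
  have hbdδ : ⟪β₂ - β₁, β₂⟫ ≤ ⟪β₂, β₂⟫ / 2 := aux_long_bound R hlong hδ hδne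
  have heqδ : ⟪β₂ - β₁, β₂⟫ = ⟪β₂, β₂⟫ := by
    rw [inner_sub_left, hzero, sub_zero]
  linarith
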